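/- Let n ≥ 1, let μ = (-1)^n, and let Δ_n be the n×n complex matrix with (i,j) entry μ^i·(−μ)^{j−1}·C(j−1, n−i) for 1 ≤ i, j ≤ n. Then Δ_nᵀ = −Δ_n · J_n(μ)^n. -/

import Mathlib

open Matrix BigOperators Finset

noncomputable section

/-- The `n × n` upper-triangular Jordan block with eigenvalue `μ`:
`μ` on the diagonal, `1` on the first superdiagonal, `0` elsewhere. -/
def Jmat (n : ℕ) (μ : ℂ) : Matrix (Fin n) (Fin n) ℂ :=
  Matrix.of fun i j => if i = j then μ else if (j : ℕ) = (i : ℕ) + 1 then 1 else 0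

/-- The Pascal-type matrix `Δ_n`, whose 1-based `(i,j)` entry is
`μ^i * (−μ)^(j−1) * C(j−1, n−i)` (here indices are 0-based, so shifted by one). -/
def Delta (n : ℕ) (μ : ℂ) : Matrix (Fin n) (Fin n) ℂ :=
  Matrix.of fun i j =>
    μ ^ ((i : ℕ) + 1) * (-μ) ^ (j : ℕ) * ((j : ℕ).choose (n - ((i : ℕ) + 1)) : ℂ)

/-- The `2n × 2n` block matrix `H_{2n}(μ) = [[0, I],[J_n(μ), 0]]`. -/
def Hmat (n : ℕ) (μ : ℂ) : Matrix (Fin n ⊕ Fin n) (Fin n ⊕ Fin n) ℂ :=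
  Matrix.fromBlocks 0 1 (Jmat n μ) 0

/-- The `n × n` reversed identity matrix: `1` on the antidiagonal, `0` elsewhere. -/
def Rev (n : ℕ) : Matrix (Fin n) (Fin n) ℂ :=
  Matrix.of fun i j => if j = i.rev then 1 else 0

open PowerSeries

lemma neg_one_pow_congr' {a b : ℕ} (h : a % 2 = b % 2) : ((-1:ℂ))^a = (-1)^b := by
  rw [← Nat.div_add_mod a 2, ← Nat.div_add_mod b 2, pow_add, pow_add, pow_mul, pow_mul]
  simp [h]

lemma coeff_one_add_X_pow (m q : ℕ) :
    PowerSeries.coeff q ((1 + X)^m) = (m.choose q : ℂ) := by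
  rw [show (1 + X : ℂ⟦X⟧) = X + 1 from add_comm _ _, add_pow]
  simp only [one_pow, mul_one, map_sum]
  have h : ∀ k ∈ Finset.range (m+1),
      PowerSeries.coeff q (X ^ k * ((m.choose k : ℕ) : ℂ⟦X⟧)) =
        if k = q then (m.choose k : ℂ) else 0 := by
    intro k _
    rw [show ((m.choose k : ℕ) : ℂ⟦X⟧) = PowerSeries.C ((m.choose k : ℕ) : ℂ) from rfl]
    rw [PowerSeries.coeff_mul_C, PowerSeries.coeff_X_pow]
    by_cases h : q = k <;> simp [h, eq_comm]
  rw [Finset.sum_congr rfl h, Finset.sum_ite_eq' (Finset.range (m+1)) q]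
  by_cases hq : q ≤ m
  · simp [Finset.mem_range, Nat.lt_succ_of_le hq]
  · simp [Finset.mem_range, Nat.choose_eq_zero_of_lt (by omega : m < q), hq, Nat.lt_succ_iff]

lemma key (n a j : ℕ) (ha : a < n) (hj : j < n) :
    ∑ k ∈ Finset.range (j+1), (-1:ℂ)^k * (k.choose a : ℂ) * (n.choose (j-k) : ℂ)
      = (-1)^a * ((n-1-a).choose (n-1-j) : ℂ) := by
  set B : ℂ⟦X⟧ := PowerSeries.mk fun m => (-1:ℂ)^m * ((a+m).choose a : ℂ) with hBdef
  have h1 : B * (1+X)^(a+1) = 1 := by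
    have h2 : (PowerSeries.mk fun m => (((a+m).choose a : ℕ) : ℂ)) * ((1 - X)^(a+1)) = 1 :=
      PowerSeries.mk_add_choose_mul_one_sub_pow_eq_one ℂ a
    have h3 : B = PowerSeries.rescale (-1) (PowerSeries.mk fun m => (((a+m).choose a : ℕ) : ℂ)) := by
      rw [rescale_mk]
    have h4 : ((1:ℂ⟦X⟧)+X)^(a+1) = PowerSeries.rescale (-1) ((1 - X)^(a+1)) := by
      rw [map_pow, map_sub, _root_.map_one, rescale_neg_one_X, sub_neg_eq_add]
    rw [h3, h4, ← _root_.map_mul, h2, _root_.map_one]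
  have key_eq : (B * X^a) * (1+X)^n = (1+X)^(n-1-a) * X^a := by
    rw [show ((1:ℂ⟦X⟧)+X)^n = (1+X)^(a+1) * (1+X)^(n-1-a) from by
      rw [← pow_add]; congr 1; omega]
    calc B * X^a * ((1+X)^(a+1) * (1+X)^(n-1-a))
        = (B * (1+X)^(a+1)) * ((1+X)^(n-1-a) * X^a) := by ring
      _ = (1+X)^(n-1-a) * X^a := by rw [h1, one_mul]
  have hA : ∀ k : ℕ, PowerSeries.coeff k (B * X^a)
      = (-1:ℂ)^a * ((-1)^k * (k.choose a : ℂ)) := by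
    intro k
    rw [PowerSeries.coeff_mul_X_pow']
    by_cases hk : a ≤ k
    · simp only [hk, if_true, hBdef, coeff_mk]
      rw [show a + (k - a) = k from by omega]
      rw [show (-1:ℂ)^(k-a) = (-1)^a * (-1)^k from by
        rw [← pow_add]; exact neg_one_pow_congr' (by omega)]
      ring
    · simp [hk, Nat.choose_eq_zero_of_lt (by omega : k < a)]
  have hL := congrArg (PowerSeries.coeff j) key_eq
  rw [PowerSeries.coeff_mul, Finset.Nat.sum_antidiagonal_eq_sum_range_succ_mk,
    PowerSeries.coeff_mul_X_pow'] at hL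
  simp only [hA, coeff_one_add_X_pow] at hL
  have hR : (if a ≤ j then (((n-1-a).choose (j-a) : ℕ) : ℂ) else 0)
      = ((n-1-a).choose (n-1-j) : ℂ) := by
    by_cases haj : a ≤ j
    · rw [if_pos haj]
      congr 1
      rw [show n-1-j = (n-1-a) - (j-a) from by omega]
      exact (Nat.choose_symm (by omega)).symm
    · rw [if_neg haj]
      rw [Nat.choose_eq_zero_of_lt (by omega : n-1-a < n-1-j)]
      simp
  rw [hR] at hL
  calc ∑ k ∈ Finset.range (j+1), (-1:ℂ)^k * (k.choose a : ℂ) * (n.choose (j-k) : ℂ)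
      = (-1:ℂ)^a * ((-1)^a * ∑ k ∈ Finset.range (j+1),
          (-1:ℂ)^k * (k.choose a : ℂ) * (n.choose (j-k) : ℂ)) := by
        rw [← mul_assoc, ← pow_add, neg_one_pow_congr' (a := a+a) (b := 0) (by omega),
          pow_zero, one_mul]
    _ = (-1:ℂ)^a * ((n-1-a).choose (n-1-j) : ℂ) := by
        rw [← hL, Finset.mul_sum]
        exact congrArg _ (Finset.sum_congr rfl (fun k _ => by ring))


noncomputable section


lemma mul_Jmat {n : ℕ} (μ : ℂ) (M : Matrix (Fin n) (Fin n) ℂ) (i j : Fin n) :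
    (M * Jmat n μ) i j = μ * M i j +
      (if h : 0 < (j:ℕ) then M i ⟨(j:ℕ)-1, by omega⟩ else 0) := by
  rw [Matrix.mul_apply]
  have hsplit : ∀ k : Fin n, M i k * Jmat n μ k j =
      (if k = j then μ * M i k else 0) +
      (if k = (⟨(j:ℕ)-1, by omega⟩ : Fin n) ∧ 0 < (j:ℕ) then M i k else 0) := by
    intro k
    simp only [Jmat, Matrix.of_apply, Fin.ext_iff]
    split_ifs <;> first | ring1 | (exfalso; omega)
  rw [Finset.sum_congr rfl (fun k _ => hsplit k), Finset.sum_add_distrib,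
    Finset.sum_ite_eq' Finset.univ j (fun k => μ * M i k)]
  simp only [Finset.mem_univ, if_true]
  congr 1
  by_cases hj : 0 < (j:ℕ)
  · rw [dif_pos hj]
    have hc : ∀ k : Fin n,
        (if k = (⟨(j:ℕ)-1, by omega⟩ : Fin n) ∧ 0 < (j:ℕ) then M i k else 0)
          = (if k = (⟨(j:ℕ)-1, by omega⟩ : Fin n) then M i k else 0) := by
      intro k; simp [hj]
    rw [Finset.sum_congr rfl (fun k _ => hc k),
      Finset.sum_ite_eq' Finset.univ _ (fun k => M i k)]
    simp
  · rw [dif_neg hj]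
    apply Finset.sum_eq_zero
    intro k _
    rw [if_neg (by rintro ⟨_, h⟩; exact hj h)]

lemma Jpow {n : ℕ} (μ : ℂ) (t : ℕ) (i j : Fin n) :
    ((Jmat n μ)^t) i j = if (i:ℕ) ≤ (j:ℕ) then
      (t.choose ((j:ℕ)-(i:ℕ)) : ℂ) * μ^(t-((j:ℕ)-(i:ℕ))) else 0 := by
  induction t generalizing i j with
  | zero =>
    rw [pow_zero]
    by_cases h : i = j
    · subst h; simp [Matrix.one_apply_eq]
    · rw [Matrix.one_apply_ne h]
      have hne : (i:ℕ) ≠ (j:ℕ) := fun hc => h (Fin.ext hc)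
      by_cases hle : (i:ℕ) ≤ (j:ℕ)
      · rw [if_pos hle, Nat.choose_eq_zero_of_lt (by omega)]; simp
      · rw [if_neg hle]
  | succ t ih =>
    rw [pow_succ, mul_Jmat μ _ i j, ih]
    by_cases hle : (i:ℕ) ≤ (j:ℕ)
    · simp only [hle, if_true]
      set d := (j:ℕ) - (i:ℕ) with hd
      by_cases hd0 : d = 0
      · have h2 : (if h : 0 < (j:ℕ) then (Jmat n μ ^ t) i ⟨(j:ℕ)-1, by omega⟩ else 0) = 0 := by
          by_cases hj : 0 < (j:ℕ)
          · rw [dif_pos hj, ih, if_neg (by simp only [Fin.val_mk]; omega)]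
          · rw [dif_neg hj]
        rw [h2, hd0]
        simp only [Nat.choose_zero_right, Nat.cast_one, one_mul, Nat.sub_zero, add_zero]
        rw [← pow_succ']
      · have hj : 0 < (j:ℕ) := by omega
        rw [dif_pos hj, ih, if_pos (by simp only [Fin.val_mk]; omega)]
        simp only [Fin.val_mk]
        rw [show (j:ℕ) - 1 - (i:ℕ) = d - 1 from by omega]
        have hpascal : ((t+1).choose d : ℂ) = (t.choose d : ℂ) + (t.choose (d-1) : ℂ) := by
          rw [show d = (d-1)+1 from by omega, Nat.choose_succ_succ]
          push_cast; ring
        rw [hpascal]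
        by_cases hdt : d ≤ t
        · rw [show t + 1 - d = (t - d) + 1 from by omega,
            show t - (d-1) = (t-d) + 1 from by omega]
          ring
        · rw [Nat.choose_eq_zero_of_lt (by omega : t < d)]
          by_cases hdt1 : d = t + 1
          · rw [hdt1]
            simp [Nat.choose_self, show t - (t+1-1) = 0 from by omega]
          · rw [Nat.choose_eq_zero_of_lt (by omega : t < d - 1)]
            simp
    · simp only [hle, if_false]
      have h2 : (if h : 0 < (j:ℕ) then (Jmat n μ ^ t) i ⟨(j:ℕ)-1, by omega⟩ else 0) = 0 := by
        by_cases hj : 0 < (j:ℕ)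
        · rw [dif_pos hj, ih, if_neg (by simp only [Fin.val_mk]; omega)]
        · rw [dif_neg hj]
      rw [h2]; ring

/-- `Δ_nᵀ = −Δ_n · J_n(μ)^n` when `μ = (-1)^n`. -/
theorem stmt_4 (n : ℕ) (hn : 1 ≤ n) (μ : ℂ) (hμ : μ = (-1) ^ n) :
    (Delta n μ)ᵀ = -(Delta n μ * (Jmat n μ) ^ n) := by
  ext i j
  rw [Matrix.transpose_apply, Matrix.neg_apply, Matrix.mul_apply]
  set a := n - ((i:ℕ)+1) with ha
  have hi : (i:ℕ) < n := i.isLt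
  have hj : (j:ℕ) < n := j.isLt
  have han : a < n := by omega
  set F : ℕ → ℂ := fun k => μ^((i:ℕ)+1) * (-μ)^k * ((k.choose a : ℕ) : ℂ) *
      (if k ≤ (j:ℕ) then ((n.choose ((j:ℕ)-k) : ℕ):ℂ) * μ^(n-((j:ℕ)-k)) else 0) with hF
  have hstep : ∀ k : Fin n, Delta n μ i k * ((Jmat n μ)^n) k j = F (k:ℕ) := by
    intro k
    rw [Jpow]
    simp only [Delta, Matrix.of_apply, ← ha]
    rfl
  rw [Finset.sum_congr rfl (fun k _ => hstep k), Fin.sum_univ_eq_sum_range F n,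
    ← Finset.sum_subset (Finset.range_subset_range.2 (show (j:ℕ)+1 ≤ n from hj))
      (fun k _ hk => by
        have h' : ¬ (k ≤ (j:ℕ)) := by simp only [Finset.mem_range] at hk; omega
        simp only [hF, if_neg h', mul_zero])]
  have hifs : ∀ k ∈ Finset.range ((j:ℕ)+1),
      F k = μ^((i:ℕ)+1) * (-μ)^k * ((k.choose a : ℕ) : ℂ) *
          (((n.choose ((j:ℕ)-k) : ℕ):ℂ) * μ^(n-((j:ℕ)-k))) := by
    intro k hk
    have h' : k ≤ (j:ℕ) := by simp only [Finset.mem_range] at hk; omega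
    simp only [hF, if_pos h']
  rw [Finset.sum_congr rfl hifs]
  simp only [Delta, Matrix.of_apply]
  rcases Nat.even_or_odd n with he | ho
  · -- n even, μ = 1
    have hn2 : n % 2 = 0 := Nat.even_iff.1 he
    have hμ1 : μ = 1 := by rw [hμ, he.neg_one_pow]
    have hterm : ∀ k ∈ Finset.range ((j:ℕ)+1),
        μ^((i:ℕ)+1) * (-μ)^k * ((k.choose a : ℕ) : ℂ) *
          (((n.choose ((j:ℕ)-k) : ℕ):ℂ) * μ^(n-((j:ℕ)-k)))
        = (-1:ℂ)^k * (k.choose a : ℂ) * (n.choose ((j:ℕ)-k) : ℂ) := by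
      intro k _
      rw [hμ1]
      ring
    rw [Finset.sum_congr rfl hterm, key n a (j:ℕ) han hj]
    rw [hμ1]
    rw [show n - ((j:ℕ)+1) = n - 1 - (j:ℕ) from by omega,
      show n - 1 - a = (i:ℕ) from by omega]
    have h5 : -((-1:ℂ)^a) = (-1)^(i:ℕ) := by
      rw [show -((-1:ℂ)^a) = (-1)^(a+1) from by rw [pow_succ]; ring,
        neg_one_pow_congr' (show (a+1) % 2 = (i:ℕ) % 2 from by omega)]
    rw [← h5]
    simp only [one_pow, one_mul]
    ring
  · -- n odd, μ = -1
    have hn2 : n % 2 = 1 := Nat.odd_iff.1 ho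
    have hμ1 : μ = -1 := by rw [hμ, ho.neg_one_pow]
    have hterm : ∀ k ∈ Finset.range ((j:ℕ)+1),
        μ^((i:ℕ)+1) * (-μ)^k * ((k.choose a : ℕ) : ℂ) *
          (((n.choose ((j:ℕ)-k) : ℕ):ℂ) * μ^(n-((j:ℕ)-k)))
        = ((-1:ℂ)^((i:ℕ)+1) * (-1)^(n-(j:ℕ))) *
            ((-1:ℂ)^k * (k.choose a : ℂ) * (n.choose ((j:ℕ)-k) : ℂ)) := by
      intro k hk
      simp only [Finset.mem_range] at hk
      rw [hμ1, show n - ((j:ℕ)-k) = (n-(j:ℕ)) + k from by omega, pow_add]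
      simp only [neg_neg, one_pow]
      ring
    rw [Finset.sum_congr rfl hterm, ← Finset.mul_sum, key n a (j:ℕ) han hj]
    rw [hμ1]
    rw [show n - ((j:ℕ)+1) = n - 1 - (j:ℕ) from by omega,
      show n - 1 - a = (i:ℕ) from by omega]
    have h5 : -((-1:ℂ)^((i:ℕ)+1) * (-1)^(n-(j:ℕ)) * (-1)^a) = (-1)^((j:ℕ)+1) := by
      rw [← pow_add, ← pow_add,
        show -((-1:ℂ)^((i:ℕ)+1+(n-(j:ℕ))+a)) = (-1)^((i:ℕ)+1+(n-(j:ℕ))+a+1) from by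
          rw [pow_succ]; ring,
        neg_one_pow_congr' (show ((i:ℕ)+1+(n-(j:ℕ))+a+1) % 2 = ((j:ℕ)+1) % 2 from by omega)]
    rw [← h5]
    simp only [neg_neg, one_pow]
    ring
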